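/- arXiv:2203.09672 — 2 statements merged into one kernel-verified Lean document; each statement's English description precedes it below -/
import Mathlib

section
/- In the binary SCM with Z ~ Bernoulli(1/2), P(T=1|Z=1)=ρ_{t1}, P(T=1|Z=0)=ρ_{t0}, P(X=1|Z=1)=ρ_{x1}, P(X=1|Z=0)=ρ_{x0}, Y = T XOR Z (with T ⊥ X | Z), the naive non-causal estimator obtained by adjusting for X instead of Z, namely Ê₁ = ∑_x P(X=x)·P(Y=1|X=x,T=1), satisfies Ê₁ = P(X=1)·ρ_{x0}ρ_{t0}/(ρ_{x1}ρ_{t1}+ρ_{x0}ρ_{t0}) + P(X=0)·(1−ρ_{x0})ρ_{t0}/((1−ρ_{x1})ρ_{t1}+(1−ρ_{x0})ρ_{t0}). -/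
open Finset

/-- In the binary SCM with `Z ~ Bernoulli(1/2)`, `P(T=1|Z=z)=ρ_t z`, `P(X=1|Z=z)=ρ_x z`,
`Y = T XOR Z` and `T ⊥ X | Z`, the naive non-causal estimator obtained by adjusting for `X`
instead of `Z`, namely `Ê₁ = ∑_x P(X=x)·P(Y=1|X=x,T=1)`, equals
`P(X=1)·ρ_x0 ρ_t0/(ρ_x1 ρ_t1 + ρ_x0 ρ_t0) + P(X=0)·(1−ρ_x0)ρ_t0/((1−ρ_x1)ρ_t1 + (1−ρ_x0)ρ_t0)`. -/
theorem naive_estimator_formula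
    (ρt0 ρt1 ρx0 ρx1 : ℝ)
    (hρt0 : 0 < ρt0 ∧ ρt0 < 1) (hρt1 : 0 < ρt1 ∧ ρt1 < 1)
    (hρx0 : 0 < ρx0 ∧ ρx0 < 1) (hρx1 : 0 < ρx1 ∧ ρx1 < 1)
    (pX : Bool → Bool → ℝ)
    (hpX : ∀ z x, pX z x = if x then (if z then ρx1 else ρx0) else (1 - if z then ρx1 else ρx0))
    (pT : Bool → Bool → ℝ)
    (hpT : ∀ z t, pT z t = if t then (if z then ρt1 else ρt0) else (1 - if z then ρt1 else ρt0))
    -- joint p(z, x, t) = p(z)·p(x|z)·p(t|z)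
    (joint : Bool → Bool → Bool → ℝ)
    (hjoint : ∀ z x t, joint z x t = 1/2 * pX z x * pT z t)
    -- marginal of X
    (pXmarg : Bool → ℝ) (hpXm : ∀ x, pXmarg x = ∑ z, 1/2 * pX z x)
    -- P(Y=1 | X=x, T=1): since Y = T XOR Z, the event {Y=1, T=1} is {Z=0, T=1}
    (pY1givenXT1 : Bool → ℝ)
    (hpY : ∀ x, pY1givenXT1 x = joint false x true / (∑ z, joint z x true)) :
    ∑ x, pXmarg x * pY1givenXT1 x =
      pXmarg true * (ρx0 * ρt0 / (ρx1 * ρt1 + ρx0 * ρt0)) +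
        pXmarg false * ((1 - ρx0) * ρt0 / ((1 - ρx1) * ρt1 + (1 - ρx0) * ρt0)) := by
  obtain ⟨ht0, ht0'⟩ := hρt0
  obtain ⟨ht1, ht1'⟩ := hρt1
  obtain ⟨hx0, hx0'⟩ := hρx0
  obtain ⟨hx1, hx1'⟩ := hρx1
  have h1 : ρx1 * ρt1 + ρx0 * ρt0 ≠ 0 :=
    ne_of_gt (add_pos (mul_pos hx1 ht1) (mul_pos hx0 ht0))
  have h0 : (1 - ρx1) * ρt1 + (1 - ρx0) * ρt0 ≠ 0 :=
    ne_of_gt (add_pos (mul_pos (by linarith) ht1) (mul_pos (by linarith) ht0))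
  simp only [Fintype.sum_bool, hpY, hjoint, hpX, hpT, hpXm]
  norm_num
  congr 1
  · congr 1
    rw [div_eq_div_iff (by intro h; apply h1; linarith) h1]; ring
  · congr 1
    rw [div_eq_div_iff (by intro h; apply h0; linarith) h0]; ring
end

section
/- In the linear structural model of the previous statement, augmented with a proxy W = B_W U + ε_W (ε_W zero-mean, independent of everything else) where B_W is square and invertible and Σ_{UU} is invertible, the causal effect β_{YX} is identified from proxy covariances: β_{YX} = (σ_{XY} − Σ_{XW}(B_W Σ_{UU} B_Wᵀ)⁻¹Σ_{YW}ᵀ)/(σ_{XX} − Σ_{XW}(B_W Σ_{UU} B_Wᵀ)⁻¹Σ_{XW}ᵀ), provided the denominator is nonzero. -/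
open MeasureTheory ProbabilityTheory Matrix

/-- Scalar covariance `Cov(X,Y) = E[(X − E X)(Y − E Y)]`. -/
noncomputable def scov {Ω : Type*} [MeasurableSpace Ω] (μ : Measure Ω)
    (X Y : Ω → ℝ) : ℝ :=
  ∫ ω, (X ω - ∫ ω', X ω' ∂μ) * (Y ω - ∫ ω', Y ω' ∂μ) ∂μ

/-- Row vector of covariances of a scalar with a random vector. -/
noncomputable def scalarVecCov {Ω : Type*} [MeasurableSpace Ω] (μ : Measure Ω) {q : ℕ}
    (X : Ω → ℝ) (W : Ω → Fin q → ℝ) : Fin q → ℝ :=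
  fun j => ∫ ω, (X ω - ∫ ω', X ω' ∂μ) * (W ω j - ∫ ω', W ω' j ∂μ) ∂μ

/-- Covariance matrix of two random vectors. -/
noncomputable def vecCov {Ω : Type*} [MeasurableSpace Ω] (μ : Measure Ω) {a b : ℕ}
    (A : Ω → Fin a → ℝ) (B : Ω → Fin b → ℝ) : Matrix (Fin a) (Fin b) ℝ :=
  fun i j => ∫ ω, (A ω i - ∫ ω', A ω' i ∂μ) * (B ω j - ∫ ω', B ω' j ∂μ) ∂μ

set_option linter.unusedSectionVars false
set_option maxHeartbeats 1000000

namespace ProxyAux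

variable {Ω : Type*} [MeasurableSpace Ω] {μ : Measure Ω} [IsProbabilityMeasure μ]

lemma integrable_mul2 {f g : Ω → ℝ} (hf : MemLp f 2 μ) (hg : MemLp g 2 μ) :
    Integrable (fun ω => f ω * g ω) μ :=
  memLp_one_iff_integrable.mp
    (MemLp.smul (μ := μ) (r := 1) hg hf)

lemma scov_comm (f g : Ω → ℝ) : scov μ f g = scov μ g f := by
  unfold scov; congr 1; funext ω; ring

lemma scov_add_right {f g h : Ω → ℝ} (hf : MemLp f 2 μ) (hg : MemLp g 2 μ)
    (hh : MemLp h 2 μ) :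
    scov μ f (fun ω => g ω + h ω) = scov μ f g + scov μ f h := by
  have hgi := hg.integrable one_le_two
  have hhi := hh.integrable one_le_two
  have hfc : MemLp (fun ω => f ω - ∫ ω', f ω' ∂μ) 2 μ := hf.sub (memLp_const _)
  have hgc : MemLp (fun ω => g ω - ∫ ω', g ω' ∂μ) 2 μ := hg.sub (memLp_const _)
  have hhc : MemLp (fun ω => h ω - ∫ ω', h ω' ∂μ) 2 μ := hh.sub (memLp_const _)
  unfold scov
  simp only [integral_add hgi hhi]
  rw [← integral_add (integrable_mul2 hfc hgc) (integrable_mul2 hfc hhc)]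
  congr 1; funext ω; ring

lemma scov_const_mul_right (c : ℝ) (f g : Ω → ℝ) :
    scov μ f (fun ω => c * g ω) = c * scov μ f g := by
  unfold scov
  have key : ∀ ω, (f ω - ∫ ω', f ω' ∂μ) * (c * g ω - ∫ ω', c * g ω' ∂μ)
      = c * ((f ω - ∫ ω', f ω' ∂μ) * (g ω - ∫ ω', g ω' ∂μ)) := by
    intro ω; rw [integral_const_mul]; ring
  simp only [key]
  exact integral_const_mul c _

lemma scov_sum_right {ι : Type*} (s : Finset ι) {f : Ω → ℝ} {g : ι → Ω → ℝ}
    (hf : MemLp f 2 μ) (hg : ∀ i ∈ s, MemLp (g i) 2 μ) :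
    scov μ f (fun ω => ∑ i ∈ s, g i ω) = ∑ i ∈ s, scov μ f (g i) := by
  classical
  induction s using Finset.induction_on with
  | empty => simp [scov]
  | @insert a s ha ih =>
      have hga := hg a (Finset.mem_insert_self a s)
      have hgs : ∀ i ∈ s, MemLp (g i) 2 μ := fun i hi => hg i (Finset.mem_insert_of_mem hi)
      have hsum : MemLp (fun ω => ∑ i ∈ s, g i ω) 2 μ := memLp_finset_sum s hgs
      simp only [Finset.sum_insert ha]
      rw [scov_add_right hf hga hsum, ih hgs]

lemma scov_indep {f g : Ω → ℝ} (h : IndepFun f g μ) (hf : MemLp f 2 μ) (hg : MemLp g 2 μ) :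
    scov μ f g = 0 := by
  have h' : IndepFun (fun ω => f ω - ∫ ω', f ω' ∂μ) (fun ω => g ω - ∫ ω', g ω' ∂μ) μ :=
    h.comp (measurable_id.sub measurable_const) (measurable_id.sub measurable_const)
  have key := h'.integral_fun_mul_eq_mul_integral ((hf.sub (memLp_const _)).aestronglyMeasurable)
    ((hg.sub (memLp_const _)).aestronglyMeasurable)
  unfold scov
  rw [key, integral_sub (hf.integrable one_le_two) (integrable_const _), integral_const]
  simp

lemma scov_expand_right {f : Ω → ℝ} (hf : MemLp f 2 μ) {n : ℕ} {g : Ω → Fin n → ℝ}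
    (hg : ∀ k, MemLp (fun ω => g ω k) 2 μ) (c : Fin n → ℝ) {e : Ω → ℝ} (he : MemLp e 2 μ) :
    scov μ f (fun ω => (∑ k, c k * g ω k) + e ω)
      = (∑ k, c k * scov μ f (fun ω => g ω k)) + scov μ f e := by
  have hsum : MemLp (fun ω => ∑ k, c k * g ω k) 2 μ :=
    memLp_finset_sum _ (fun k _ => (hg k).const_mul (c k))
  rw [scov_add_right hf hsum he,
    scov_sum_right Finset.univ hf (fun k _ => (hg k).const_mul (c k))]
  congr 1
  exact Finset.sum_congr rfl fun k _ => scov_const_mul_right (c k) f (fun ω => g ω k)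

end ProxyAux

/-- In the linear structural model `X = β_XUᵀU + ε_X`, `Y = β_YUᵀU + β_YX X + ε_Y`,
augmented with a proxy `W = B_W U + ε_W` (`ε_W` zero-mean, independent of everything else),
where `B_W` is square invertible and `Σ_UU` is invertible, the causal effect `β_YX` is
identified from proxy covariances:
`β_YX = (σ_XY − Σ_XW (B_W Σ_UU B_Wᵀ)⁻¹ Σ_YWᵀ)/(σ_XX − Σ_XW (B_W Σ_UU B_Wᵀ)⁻¹ Σ_XWᵀ)`,
provided the denominator is nonzero. -/
theorem proxy_identification_linear_sem
    {Ω : Type*} [MeasurableSpace Ω] (μ : Measure Ω) [IsProbabilityMeasure μ] {p : ℕ}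
    (U : Ω → Fin p → ℝ) (X Y εX εY : Ω → ℝ) (εW : Ω → Fin p → ℝ)
    (βXU βYU : Fin p → ℝ) (βYX : ℝ) (BW : Matrix (Fin p) (Fin p) ℝ)
    (W : Ω → Fin p → ℝ)
    (hX : ∀ ω, X ω = βXU ⬝ᵥ U ω + εX ω)
    (hY : ∀ ω, Y ω = βYU ⬝ᵥ U ω + βYX * X ω + εY ω)
    (hWdef : ∀ ω, W ω = BW.mulVec (U ω) + εW ω)
    -- independence and zero means of the noises
    (hindepX : IndepFun U εX μ)
    (hindepY : IndepFun (fun ω => (U ω, X ω)) εY μ)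
    (hindepW : IndepFun (fun ω => (U ω, X ω, Y ω)) εW μ)
    (hεX : ∫ ω, εX ω ∂μ = 0) (hεY : ∫ ω, εY ω ∂μ = 0) (hεW : ∀ i, ∫ ω, εW ω i ∂μ = 0)
    -- finite second moments
    (hU2 : ∀ i, MemLp (fun ω => U ω i) 2 μ) (hεX2 : MemLp εX 2 μ) (hεY2 : MemLp εY 2 μ)
    (hεW2 : ∀ i, MemLp (fun ω => εW ω i) 2 μ)
    -- invertibility and nonzero denominator
    (hSigma : IsUnit (vecCov μ U U).det) (hBW : IsUnit BW.det)
    (hden : scov μ X X - scalarVecCov μ X W ⬝ᵥ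
        (BW * vecCov μ U U * BWᵀ)⁻¹.mulVec (scalarVecCov μ X W) ≠ 0) :
    βYX =
      (scov μ X Y - scalarVecCov μ X W ⬝ᵥ
          (BW * vecCov μ U U * BWᵀ)⁻¹.mulVec (scalarVecCov μ Y W)) /
        (scov μ X X - scalarVecCov μ X W ⬝ᵥ
          (BW * vecCov μ U U * BWᵀ)⁻¹.mulVec (scalarVecCov μ X W)) := by
  classical
  set S : Matrix (Fin p) (Fin p) ℝ := vecCov μ U U with hSdef
  -- second moments
  have hXe : X = fun ω => (∑ i, βXU i * U ω i) + εX ω := by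
    funext ω; rw [hX ω]; simp [dotProduct]
  have hX2 : MemLp X 2 μ := by
    rw [hXe]
    exact (memLp_finset_sum _ fun i _ => (hU2 i).const_mul (βXU i)).add hεX2
  have hYe : Y = fun ω => (∑ i, βYU i * U ω i) + (βYX * X ω + εY ω) := by
    funext ω; rw [hY ω]; simp [dotProduct, add_assoc]
  have hY2 : MemLp Y 2 μ := by
    rw [hYe]
    exact (memLp_finset_sum _ fun i _ => (hU2 i).const_mul (βYU i)).add
      ((hX2.const_mul βYX).add hεY2)
  have hWe : ∀ j, (fun ω => W ω j) = fun ω => (∑ k, BW j k * U ω k) + εW ω j := by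
    intro j; funext ω; rw [hWdef ω]; simp [Matrix.mulVec, dotProduct]
  -- independences
  have hXεY : IndepFun X εY μ := hindepY.comp measurable_snd measurable_id
  have hUεY : ∀ k, IndepFun (fun ω => U ω k) εY μ := fun k =>
    hindepY.comp ((measurable_pi_apply k).comp measurable_fst) measurable_id
  have hXεW : ∀ j, IndepFun X (fun ω => εW ω j) μ := fun j =>
    hindepW.comp (measurable_fst.comp measurable_snd) (measurable_pi_apply j)
  have hYεW : ∀ j, IndepFun Y (fun ω => εW ω j) μ := fun j =>
    hindepW.comp (measurable_snd.comp measurable_snd) (measurable_pi_apply j)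
  -- covariance identities with the proxy
  have hXW : scalarVecCov μ X W = BW.mulVec (scalarVecCov μ X U) := by
    funext j
    show scov μ X (fun ω => W ω j) = (BW.mulVec (scalarVecCov μ X U)) j
    rw [hWe j, ProxyAux.scov_expand_right hX2 hU2 (BW j) (hεW2 j),
      ProxyAux.scov_indep (hXεW j) hX2 (hεW2 j), add_zero]
    rfl
  have hYW : scalarVecCov μ Y W = BW.mulVec (scalarVecCov μ Y U) := by
    funext j
    show scov μ Y (fun ω => W ω j) = (BW.mulVec (scalarVecCov μ Y U)) j
    rw [hWe j, ProxyAux.scov_expand_right hY2 hU2 (BW j) (hεW2 j),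
      ProxyAux.scov_indep (hYεW j) hY2 (hεW2 j), add_zero]
    rfl
  -- covariance of Y with U
  have hsYU : scalarVecCov μ Y U = S.mulVec βYU + βYX • scalarVecCov μ X U := by
    funext j
    show scov μ Y (fun ω => U ω j) = (S.mulVec βYU + βYX • scalarVecCov μ X U) j
    rw [ProxyAux.scov_comm, hYe,
      ProxyAux.scov_expand_right (hU2 j) hU2 βYU (e := fun ω => βYX * X ω + εY ω)
        ((hX2.const_mul βYX).add hεY2),
      ProxyAux.scov_add_right (g := fun ω => βYX * X ω) (h := εY) (hU2 j)
        (hX2.const_mul βYX) hεY2,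
      ProxyAux.scov_const_mul_right, ProxyAux.scov_indep (hUεY j) (hU2 j) hεY2, add_zero,
      ProxyAux.scov_comm (fun ω => U ω j) X]
    show (∑ k, βYU k * S j k) + βYX * scalarVecCov μ X U j
        = (∑ k, S j k * βYU k) + βYX * scalarVecCov μ X U j
    congr 1
    exact Finset.sum_congr rfl fun k _ => mul_comm _ _
  -- covariance of X with Y
  have hXYc : scov μ X Y = βYU ⬝ᵥ scalarVecCov μ X U + βYX * scov μ X X := by
    conv_lhs => rw [hYe]
    rw [ProxyAux.scov_expand_right hX2 hU2 βYU (e := fun ω => βYX * X ω + εY ω)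
        ((hX2.const_mul βYX).add hεY2),
      ProxyAux.scov_add_right (g := fun ω => βYX * X ω) (h := εY) hX2
        (hX2.const_mul βYX) hεY2,
      ProxyAux.scov_const_mul_right, ProxyAux.scov_indep hXεY hX2 hεY2, add_zero]
    rfl
  -- matrix algebra: the proxy quadratic form reduces to the S⁻¹ quadratic form
  have hBWT : IsUnit (BWᵀ).det := by rwa [Matrix.det_transpose]
  have hM : BWᵀ * (BW * S * BWᵀ)⁻¹ * BW = S⁻¹ := by
    rw [Matrix.mul_inv_rev, Matrix.mul_inv_rev, ← Matrix.mul_assoc,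
      Matrix.mul_nonsing_inv _ hBWT, Matrix.one_mul, Matrix.mul_assoc,
      Matrix.nonsing_inv_mul _ hBW, Matrix.mul_one]
  have hQ : ∀ a b : Fin p → ℝ,
      BW.mulVec a ⬝ᵥ (BW * S * BWᵀ)⁻¹.mulVec (BW.mulVec b) = a ⬝ᵥ S⁻¹.mulVec b := by
    intro a b
    rw [Matrix.dotProduct_mulVec, Matrix.dotProduct_mulVec, Matrix.dotProduct_mulVec,
      ← Matrix.vecMul_transpose, Matrix.vecMul_vecMul, Matrix.vecMul_vecMul, ← Matrix.mul_assoc, hM]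
  rw [hXW, hQ] at hden
  rw [hXW, hYW, hQ, hQ, hXYc, hsYU, Matrix.mulVec_add, Matrix.mulVec_smul,
    Matrix.mulVec_mulVec, Matrix.nonsing_inv_mul _ hSigma, Matrix.one_mulVec,
    dotProduct_add, dotProduct_smul,
    dotProduct_comm (scalarVecCov μ X U) βYU, smul_eq_mul, eq_div_iff hden]
  ring
end
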